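/- Let G and E be d×d Hermitian matrices with G positive semidefinite. Then ‖G − [G + E]₊‖_tr ≤ 2·‖E‖_tr, where [·]₊ denotes the positive part of a Hermitian matrix and ‖·‖_tr is the trace norm. -/

import Mathlib

open scoped ComplexOrder Matrix BigOperators Kronecker
open MeasureTheory

noncomputable section

/-- The square root of a positive semidefinite matrix, as defined in Mathlib (Dec 2024). -/
def Matrix.PosSemidef.sqrt {n : Type*} [Fintype n] [DecidableEq n] {A : Matrix n n ℂ}
    (hA : A.PosSemidef) : Matrix n n ℂ :=
  (hA.1.eigenvectorUnitary : Matrix n n ℂ) *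
    Matrix.diagonal ((↑) ∘ (fun x : ℝ => Real.sqrt x) ∘ hA.1.eigenvalues) *
    (star hA.1.eigenvectorUnitary : Matrix n n ℂ)

open scoped MatrixOrder in
lemma Matrix.PosSemidef.sqrt_eq_cfcSqrt {n : Type*} [Fintype n] [DecidableEq n]
    {A : Matrix n n ℂ} (hA : A.PosSemidef) : hA.sqrt = CFC.sqrt A := by
  rw [CFC.sqrt_eq_cfc, cfc_nnreal_eq_real _ A, hA.1.cfc_eq]
  simp only [Matrix.PosSemidef.sqrt, Matrix.IsHermitian.cfc, Unitary.conjStarAlgAut_apply]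
  congr 2
  congr 1
  funext i
  simp [Real.coe_toNNReal', max_eq_left (hA.eigenvalues_nonneg i)]

open scoped MatrixOrder in
lemma Matrix.PosSemidef.posSemidef_sqrt {n : Type*} [Fintype n] [DecidableEq n]
    {A : Matrix n n ℂ} (hA : A.PosSemidef) : hA.sqrt.PosSemidef := by
  rw [hA.sqrt_eq_cfcSqrt]; exact Matrix.nonneg_iff_posSemidef.mp (CFC.sqrt_nonneg A)

open scoped MatrixOrder in
lemma Matrix.PosSemidef.sq_sqrt {n : Type*} [Fintype n] [DecidableEq n]
    {A : Matrix n n ℂ} (hA : A.PosSemidef) : hA.sqrt ^ 2 = A := by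
  rw [hA.sqrt_eq_cfcSqrt]; exact CFC.sq_sqrt A hA.nonneg

open scoped MatrixOrder in
lemma Matrix.PosSemidef.eq_sqrt_of_sq_eq {n : Type*} [Fintype n] [DecidableEq n]
    {S B : Matrix n n ℂ} (hS : S.PosSemidef) (hB : B.PosSemidef) (h : S ^ 2 = B) :
    S = hB.sqrt := by
  rw [hB.sqrt_eq_cfcSqrt, eq_comm, CFC.sqrt_eq_iff _ _ hB.nonneg hS.nonneg, ← sq, h]

lemma Matrix.IsHermitian.star_mul_self_mul_eq_diagonal {n : Type*} [Fintype n] [DecidableEq n]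
    {A : Matrix n n ℂ} (hA : A.IsHermitian) :
    star (hA.eigenvectorUnitary : Matrix n n ℂ) * A * (hA.eigenvectorUnitary : Matrix n n ℂ)
      = Matrix.diagonal (RCLike.ofReal ∘ hA.eigenvalues) := by
  have := hA.conjStarAlgAut_star_eigenvectorUnitary
  simpa using this

/-- Trace norm of a complex square matrix: `Tr √(XᴴX)`. -/
def traceNorm {ι : Type*} [Fintype ι] [DecidableEq ι] (X : Matrix ι ι ℂ) : ℝ :=
  ((Matrix.posSemidef_conjTranspose_mul_self X).sqrt.trace).re

/-- Frobenius norm `√(Tr(XᴴX))`. -/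
def frobNorm {ι : Type*} [Fintype ι] [DecidableEq ι] (X : Matrix ι ι ℂ) : ℝ :=
  Real.sqrt ((Xᴴ * X).trace).re

/-- Operator norm (largest singular value), realized as the norm of the induced
continuous linear map on Euclidean space. -/
def opNorm {ι : Type*} [Fintype ι] [DecidableEq ι] (X : Matrix ι ι ℂ) : ℝ :=
  ‖Matrix.toEuclideanCLM (𝕜 := ℂ) X‖

/-- Euclidean norm on `ℝ^m`. -/
def l2norm {m : ℕ} (z : Fin m → ℝ) : ℝ :=
  Real.sqrt (∑ i, (z i) ^ 2)

open Classical in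
/-- The positive part `[H]₊` of a Hermitian matrix (junk value `0` otherwise). -/
def matPosPart {ι : Type*} [Fintype ι] [DecidableEq ι] (H : Matrix ι ι ℂ) :
    Matrix ι ι ℂ :=
  if h : H.IsHermitian then
    (h.eigenvectorUnitary : Matrix ι ι ℂ) *
      Matrix.diagonal (fun i => ((max (h.eigenvalues i) 0 : ℝ) : ℂ)) *
      (star h.eigenvectorUnitary : Matrix ι ι ℂ)
  else 0

open Classical in
/-- The positive semidefinite square root of a positive semidefinite matrix
(junk value `0` otherwise). -/
def psdSqrt {ι : Type*} [Fintype ι] [DecidableEq ι] (A : Matrix ι ι ℂ) :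
    Matrix ι ι ℂ :=
  if h : A.PosSemidef then h.sqrt else 0

namespace TruncAux

variable {ι : Type*} [Fintype ι] [DecidableEq ι]

lemma coe_star_mul_self (V : Matrix.unitaryGroup ι ℂ) :
    (star (V : Matrix ι ι ℂ)) * (V : Matrix ι ι ℂ) = 1 := V.2.1

lemma coe_mul_star_self (V : Matrix.unitaryGroup ι ℂ) :
    (V : Matrix ι ι ℂ) * (star (V : Matrix ι ι ℂ)) = 1 := V.2.2

lemma conj_mul_conj (V : Matrix.unitaryGroup ι ℂ) (a b : ι → ℂ) :
    ((V : Matrix ι ι ℂ) * Matrix.diagonal a * star (V : Matrix ι ι ℂ)) *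
      ((V : Matrix ι ι ℂ) * Matrix.diagonal b * star (V : Matrix ι ι ℂ)) =
    (V : Matrix ι ι ℂ) * Matrix.diagonal (fun i => a i * b i) * star (V : Matrix ι ι ℂ) := by
  simp only [Matrix.mul_assoc]
  rw [← Matrix.mul_assoc (star (V : Matrix ι ι ℂ)) (V : Matrix ι ι ℂ), coe_star_mul_self,
    Matrix.one_mul, ← Matrix.mul_assoc (Matrix.diagonal a), Matrix.diagonal_mul_diagonal]

lemma trace_conj (V : Matrix.unitaryGroup ι ℂ) (D : Matrix ι ι ℂ) :
    ((V : Matrix ι ι ℂ) * D * star (V : Matrix ι ι ℂ)).trace = D.trace := by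
  rw [Matrix.trace_mul_cycle, coe_star_mul_self, Matrix.one_mul]

lemma conj_psd (V : Matrix.unitaryGroup ι ℂ) (a : ι → ℝ) (ha : ∀ i, 0 ≤ a i) :
    (((V : Matrix ι ι ℂ) * Matrix.diagonal (fun i => ((a i : ℝ) : ℂ)) *
      star (V : Matrix ι ι ℂ))).PosSemidef := by
  have hd : (Matrix.diagonal (fun i => ((a i : ℝ) : ℂ))).PosSemidef :=
    Matrix.posSemidef_diagonal_iff.mpr fun i => Complex.zero_le_real.mpr (ha i)
  simpa [Matrix.star_eq_conjTranspose] using hd.mul_mul_conjTranspose_same (V : Matrix ι ι ℂ)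

/-- Trace norm of a Hermitian matrix is the sum of the absolute values of eigenvalues. -/
lemma traceNorm_eq_sum_abs_eigenvalues (X : Matrix ι ι ℂ) (hX : X.IsHermitian) :
    traceNorm X = ∑ i, |hX.eigenvalues i| := by
  set U := hX.eigenvectorUnitary with hU
  set S : Matrix ι ι ℂ := (U : Matrix ι ι ℂ) *
      Matrix.diagonal (fun i => ((|hX.eigenvalues i| : ℝ) : ℂ)) * star (U : Matrix ι ι ℂ) with hS
  have hSpsd : S.PosSemidef := conj_psd U _ fun i => abs_nonneg _
  have habs : (fun i => ((|hX.eigenvalues i| : ℝ) : ℂ) * ((|hX.eigenvalues i| : ℝ) : ℂ))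
      = fun i => (((hX.eigenvalues i) : ℝ) : ℂ) * (((hX.eigenvalues i) : ℝ) : ℂ) := by
    funext i
    rw [← Complex.ofReal_mul, ← Complex.ofReal_mul, abs_mul_abs_self]
  have hsq : S ^ 2 = Xᴴ * X := by
    rw [pow_two, hS, conj_mul_conj, habs, show Xᴴ = X from hX]
    conv_rhs => rw [hX.spectral_theorem, Unitary.conjStarAlgAut_apply]
    rw [show (Matrix.diagonal (RCLike.ofReal ∘ hX.eigenvalues) : Matrix ι ι ℂ)
        = Matrix.diagonal (fun i => ((hX.eigenvalues i : ℝ) : ℂ)) from rfl]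
    rw [conj_mul_conj]
  have hkey : S = (Matrix.posSemidef_conjTranspose_mul_self X).sqrt :=
    hSpsd.eq_sqrt_of_sq_eq (Matrix.posSemidef_conjTranspose_mul_self X) hsq
  rw [traceNorm, ← hkey, hS, trace_conj, Matrix.trace_diagonal, Complex.re_sum]
  simp

lemma traceNorm_neg (X : Matrix ι ι ℂ) : traceNorm (-X) = traceNorm X := by
  have h : (Matrix.posSemidef_conjTranspose_mul_self X).sqrt
      = (Matrix.posSemidef_conjTranspose_mul_self (-X)).sqrt := by
    refine ((Matrix.posSemidef_conjTranspose_mul_self X).posSemidef_sqrt).eq_sqrt_of_sq_eq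
      (Matrix.posSemidef_conjTranspose_mul_self (-X)) ?_
    rw [(Matrix.posSemidef_conjTranspose_mul_self X).sq_sqrt]
    simp
  rw [traceNorm, traceNorm, ← h]

/-- The key contraction bound. -/
lemma key_bound (X : Matrix ι ι ℂ) (hX : X.IsHermitian) (V : Matrix.unitaryGroup ι ℂ)
    (c : ι → ℝ) (hc : ∀ i, |c i| ≤ 1) :
    ∑ i, c i * (((star (V : Matrix ι ι ℂ)) * X * (V : Matrix ι ι ℂ)) i i).re
      ≤ ∑ i, |hX.eigenvalues i| := by
  set A' : Matrix.unitaryGroup ι ℂ := star hX.eigenvectorUnitary * V with hA'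
  set A : Matrix ι ι ℂ := (A' : Matrix ι ι ℂ) with hA
  have hAcoe : A = star (hX.eigenvectorUnitary : Matrix ι ι ℂ) * (V : Matrix ι ι ℂ) := rfl
  have hAA : A * star A = 1 := A'.2.2
  have hrow : ∀ j, ∑ i, Complex.normSq (A j i) = 1 := by
    intro j
    have h1 : ∑ k, A j k * star (A j k) = 1 := by
      have h0 := congrFun (congrFun hAA j) j
      simpa [Matrix.mul_apply, Matrix.star_apply, Matrix.one_apply] using h0
    have h2 := congrArg Complex.re h1
    rw [Complex.re_sum] at h2
    simpa [Complex.mul_conj] using h2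
  have hXA : (star (V : Matrix ι ι ℂ)) * X * (V : Matrix ι ι ℂ)
      = star A * Matrix.diagonal (fun j => ((hX.eigenvalues j : ℝ) : ℂ)) * A := by
    conv_lhs => rw [hX.spectral_theorem, Unitary.conjStarAlgAut_apply]
    rw [hAcoe, star_mul, star_star]
    simp only [Matrix.mul_assoc]
    rfl
  have hre : ∀ i, (((star (V : Matrix ι ι ℂ)) * X * (V : Matrix ι ι ℂ)) i i).re
      = ∑ j, hX.eigenvalues j * Complex.normSq (A j i) := by
    intro i
    rw [hXA, Matrix.mul_apply, Complex.re_sum]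
    refine Finset.sum_congr rfl fun j _ => ?_
    simp only [Matrix.mul_diagonal, Matrix.star_apply, Matrix.mul_apply,
      Matrix.diagonal_apply, Complex.star_def]
    simp [Complex.mul_re, Complex.mul_im, Complex.normSq_apply]
    ring
  calc ∑ i, c i * (((star (V : Matrix ι ι ℂ)) * X * (V : Matrix ι ι ℂ)) i i).re
      = ∑ i, ∑ j, c i * (hX.eigenvalues j * Complex.normSq (A j i)) := by
        simp only [hre, Finset.mul_sum]
    _ ≤ ∑ i, ∑ j, |hX.eigenvalues j| * Complex.normSq (A j i) := by
        refine Finset.sum_le_sum fun i _ => Finset.sum_le_sum fun j _ => ?_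
        have hs : (0:ℝ) ≤ Complex.normSq (A j i) := Complex.normSq_nonneg _
        have h1 : c i * hX.eigenvalues j ≤ |hX.eigenvalues j| := by
          calc c i * hX.eigenvalues j ≤ |c i * hX.eigenvalues j| := le_abs_self _
            _ = |c i| * |hX.eigenvalues j| := abs_mul _ _
            _ ≤ 1 * |hX.eigenvalues j| :=
                mul_le_mul_of_nonneg_right (hc i) (abs_nonneg _)
            _ = |hX.eigenvalues j| := one_mul _
        nlinarith
    _ = ∑ j, |hX.eigenvalues j| * ∑ i, Complex.normSq (A j i) := by
        rw [Finset.sum_comm]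
        simp [Finset.mul_sum]
    _ = ∑ j, |hX.eigenvalues j| := by simp [hrow]

end TruncAux

open TruncAux

/-- **Positive-part truncation bound** (from the proof of the fidelity-
certification theorem of "Quantum Tomography via Compressed Sensing").

For `G` positive semidefinite and `E` Hermitian,
`‖G - [G + E]₊‖_tr ≤ 2 ‖E‖_tr`. -/
theorem positive_part_truncation_bound
    {ι : Type*} [Fintype ι] [DecidableEq ι]
    (G E : Matrix ι ι ℂ) (hG : G.PosSemidef) (hE : E.IsHermitian) :
    traceNorm (G - matPosPart (G + E)) ≤ 2 * traceNorm E := by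
  classical
  set H : Matrix ι ι ℂ := G + E with hHdef
  have hH : H.IsHermitian := hG.1.add hE
  set V := hH.eigenvectorUnitary with hV
  set μ := hH.eigenvalues with hμ
  set N : Matrix ι ι ℂ := (V : Matrix ι ι ℂ) *
      Matrix.diagonal (fun i => ((max (-μ i) 0 : ℝ) : ℂ)) * star (V : Matrix ι ι ℂ) with hN
  have hNpsd : N.PosSemidef := conj_psd V _ fun i => le_max_right _ _
  -- matPosPart H = H + N
  have hPos : matPosPart H = H + N := by
    rw [matPosPart, dif_pos hH]
    conv_rhs => rw [hH.spectral_theorem, Unitary.conjStarAlgAut_apply]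
    simp only [← hμ, ← hV]
    rw [hN, ← Matrix.add_mul, ← Matrix.mul_add, Matrix.diagonal_add]
    congr 1
    congr 1
    rw [Matrix.diagonal_eq_diagonal_iff]
    intro i
    show ((max (μ i) 0 : ℝ) : ℂ) = ((μ i : ℝ) : ℂ) + ((max (-μ i) 0 : ℝ) : ℂ)
    rw [← Complex.ofReal_add]
    norm_cast
    rcases le_total (μ i) 0 with h | h
    · rw [max_eq_right h, max_eq_left (by linarith)]; ring
    · rw [max_eq_left h, max_eq_right (by linarith)]; ring
  have hKey : G - matPosPart H = -(E + N) := by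
    rw [hPos, hHdef]
    abel
  have hEN : (E + N).IsHermitian := hE.add hNpsd.1
  have h1 : traceNorm (G - matPosPart H) = ∑ i, |hEN.eigenvalues i| := by
    rw [hKey, traceNorm_neg, traceNorm_eq_sum_abs_eigenvalues _ hEN]
  have hEtn : traceNorm E = ∑ i, |hE.eigenvalues i| := traceNorm_eq_sum_abs_eigenvalues _ hE
  -- triangle-like step
  set T := hEN.eigenvectorUnitary with hT
  set ν := hEN.eigenvalues with hν
  set c : ι → ℝ := fun i => if 0 ≤ ν i then 1 else -1 with hc
  have hc1 : ∀ i, |c i| ≤ 1 := by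
    intro i; rw [hc]; dsimp only; split_ifs <;> simp
  have hdiagEN : (star (T : Matrix ι ι ℂ)) * (E + N) * (T : Matrix ι ι ℂ)
      = Matrix.diagonal (RCLike.ofReal ∘ ν) := hEN.star_mul_self_mul_eq_diagonal
  have hsplit : ∑ i, |ν i|
      = (∑ i, c i * ((star (T : Matrix ι ι ℂ) * E * T) i i).re)
        + ∑ i, c i * ((star (T : Matrix ι ι ℂ) * N * T) i i).re := by
    rw [← Finset.sum_add_distrib]
    refine Finset.sum_congr rfl fun i _ => ?_
    have hsum : (star (T : Matrix ι ι ℂ) * E * T) i i + (star (T : Matrix ι ι ℂ) * N * T) i i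
        = ((ν i : ℝ) : ℂ) := by
      have hEq : star (T : Matrix ι ι ℂ) * E * (T : Matrix ι ι ℂ)
          + star (T : Matrix ι ι ℂ) * N * (T : Matrix ι ι ℂ)
          = star (T : Matrix ι ι ℂ) * (E + N) * (T : Matrix ι ι ℂ) := by
        rw [Matrix.mul_add, Matrix.add_mul]
      calc (star (T : Matrix ι ι ℂ) * E * T) i i + (star (T : Matrix ι ι ℂ) * N * T) i i
          = (star (T : Matrix ι ι ℂ) * E * T + star (T : Matrix ι ι ℂ) * N * T) i i := rfl
        _ = ((ν i : ℝ) : ℂ) := by rw [hEq, hdiagEN]; simp [Matrix.diagonal_apply_eq]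
    rw [← mul_add, ← Complex.add_re, hsum, Complex.ofReal_re]
    rw [hc]; dsimp only
    split_ifs with h
    · rw [abs_of_nonneg h, one_mul]
    · rw [abs_of_neg (not_le.mp h)]; ring
  have h3 : ∑ i, |ν i| ≤ (∑ i, |hE.eigenvalues i|) + ∑ i, |hNpsd.1.eigenvalues i| := by
    rw [hsplit]
    exact add_le_add (key_bound E hE T c hc1) (key_bound N hNpsd.1 T c hc1)
  -- trace of N
  have htrN : N.trace = ∑ i, ((max (-μ i) 0 : ℝ) : ℂ) := by
    rw [hN, trace_conj, Matrix.trace_diagonal]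
  have htrN2 : N.trace = ∑ i, ((hNpsd.1.eigenvalues i : ℝ) : ℂ) := by
    conv_lhs => rw [hNpsd.1.spectral_theorem, Unitary.conjStarAlgAut_apply]
    rw [trace_conj, Matrix.trace_diagonal]
    rfl
  have h4 : ∑ i, |hNpsd.1.eigenvalues i| = ∑ i, max (-μ i) 0 := by
    have heq : ∑ i, hNpsd.1.eigenvalues i = ∑ i, max (-μ i) 0 := by
      have hc2 := htrN2.symm.trans htrN
      rw [← Complex.ofReal_sum, ← Complex.ofReal_sum] at hc2
      exact_mod_cast hc2
    rw [← heq]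
    exact Finset.sum_congr rfl fun i _ => abs_of_nonneg (hNpsd.eigenvalues_nonneg i)
  -- tr N ≤ ‖E‖_tr
  set c' : ι → ℝ := fun i => if μ i < 0 then -1 else 0 with hc'
  have hc'1 : ∀ i, |c' i| ≤ 1 := by
    intro i; rw [hc']; dsimp only; split_ifs <;> norm_num
  have hdiagH : star (V : Matrix ι ι ℂ) * H * (V : Matrix ι ι ℂ)
      = Matrix.diagonal (RCLike.ofReal ∘ μ) := hH.star_mul_self_mul_eq_diagonal
  have hGpsd' : (star (V : Matrix ι ι ℂ) * G * (V : Matrix ι ι ℂ)).PosSemidef := by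
    have h := hG.conjTranspose_mul_mul_same (V : Matrix ι ι ℂ)
    simpa [Matrix.star_eq_conjTranspose] using h
  have hdiagG : ∀ i, 0 ≤ ((star (V : Matrix ι ι ℂ) * G * (V : Matrix ι ι ℂ)) i i).re := by
    intro i
    have h := hGpsd'.re_dotProduct_nonneg (Pi.single i 1)
    simpa [dotProduct, Matrix.mulVec_single, Pi.single_apply, Finset.sum_ite_eq,
      RCLike.re_to_complex, apply_ite] using h
  have h5 : ∑ i, max (-μ i) 0 ≤ ∑ i, |hE.eigenvalues i| := by
    have hstep : ∀ i, max (-μ i) 0 ≤ c' i * ((star (V : Matrix ι ι ℂ) * E * V) i i).re := by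
      intro i
      have hμi : μ i = ((star (V : Matrix ι ι ℂ) * G * V) i i).re
          + ((star (V : Matrix ι ι ℂ) * E * V) i i).re := by
        have hEq : star (V : Matrix ι ι ℂ) * G * (V : Matrix ι ι ℂ)
            + star (V : Matrix ι ι ℂ) * E * (V : Matrix ι ι ℂ)
            = star (V : Matrix ι ι ℂ) * H * (V : Matrix ι ι ℂ) := by
          rw [hHdef, Matrix.mul_add, Matrix.add_mul]
        have : ((star (V : Matrix ι ι ℂ) * G * V) i i + (star (V : Matrix ι ι ℂ) * E * V) i i)
            = ((μ i : ℝ) : ℂ) := by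
          calc (star (V : Matrix ι ι ℂ) * G * V) i i + (star (V : Matrix ι ι ℂ) * E * V) i i
              = (star (V : Matrix ι ι ℂ) * G * V + star (V : Matrix ι ι ℂ) * E * V) i i := rfl
            _ = ((μ i : ℝ) : ℂ) := by rw [hEq, hdiagH]; simp [Matrix.diagonal_apply_eq]
        have h' := congrArg Complex.re this
        rw [Complex.add_re, Complex.ofReal_re] at h'
        linarith [h'.symm]
      rcases lt_or_ge (μ i) 0 with h | h
      · rw [hc']; dsimp only; rw [if_pos h, max_eq_left (by linarith)]
        have := hdiagG i
        rw [hμi]; ring_nf; linarith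
      · rw [hc']; dsimp only; rw [if_neg (not_lt.mpr h), max_eq_right (by linarith)]
        simp
    calc ∑ i, max (-μ i) 0 ≤ ∑ i, c' i * ((star (V : Matrix ι ι ℂ) * E * V) i i).re :=
          Finset.sum_le_sum fun i _ => hstep i
      _ ≤ ∑ i, |hE.eigenvalues i| := key_bound E hE V c' hc'1
  rw [h1, hEtn]
  linarith [h3, h4, h5]
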